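/- Let J be the symmetric 3×3 Jacobian of the star-shaped network with M = 3, i.e. J_{ik} = Σ_{j=1}^{3} β_j φ_{ij} φ_{kj} − γ·δ_{ik}. Assume 0 < β0 < γ (so R0 = β0/γ < 1), ζ·β0 > γ, and ζ < 1 + 3(1−R0)/R0. If φ0 ∈ (0, 1/2] and |φ0 − 1/3| < φ̃3, then every eigenvalue of J is negative (equivalently, J is negative definite). -/

import Mathlib

open Matrix

set_option maxHeartbeats 1000000 in
theorem aux_aNeg (B G W u : ℝ) (hB : 0 < B) (hBG : B < G) (hW : G < W)
    (hZc : W < 3*G - 2*B) (hu0 : -1 < u) (hu1 : u ≤ 1/2)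
    (hD : 0 < 2*W*G + G*B - 3*W*B)
    (h9 : (2*W*G+G*B-3*W*B)*u^2 < G*(3*G-2*B-W)) :
    B*(2-u)^2 + 2*W*(1+u)^2 - 9*G < 0 := by
  have hGpos : 0 < G := hB.trans hBG
  have hid : B*(2-u)^2 + 2*W*(1+u)^2 - 9*G
      = -((9/4)*(4*G-2*W-B) + (1/2-u)*(4*(W-B)+(B+2*W)*(1/2+u))) := by ring
  rw [hid]
  have hq : (0:ℝ) ≤ 1/2 - u := by linarith
  rcases le_or_gt (4*(W-B)+(B+2*W)*(1/2+u)) 0 with hM | hM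
  · nlinarith [mul_nonneg hq (neg_nonneg.mpr hM),
      mul_pos hB (sub_pos.mpr hBG), mul_pos (sub_pos.mpr hW) hB,
      mul_nonneg hq (by linarith : (0:ℝ) ≤ G - B),
      sq_nonneg (u+1), sq_nonneg u, mul_pos hD (mul_pos hB hB)]
  · rcases le_or_gt (1/2+u) 0 with hu2 | hu2
    · nlinarith [h9, mul_pos hB (sub_pos.mpr hBG), sq_nonneg (u+1),
        mul_nonneg hq hM.le,
        mul_pos hGpos (sub_pos.mpr hW), mul_pos hB (sub_pos.mpr hW),
        mul_nonneg (by linarith : (0:ℝ) ≤ -(1/2+u)) hq]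
    · have hT : 0 < (9/4)*(4*G-2*W-B) + (1/2-u)*(4*(W-B)+(B+2*W)*(1/2+u)) := by
        rcases le_or_gt W (2*G) with h2 | h2
        · have hGT : 0 < G * ((9/4)*(4*G-2*W-B) + (1/2-u)*(4*(W-B)+(B+2*W)*(1/2+u))) := by
            have h1 : 0 ≤ (1/2-u)*(4*G*(W-B) - (1/2+u)*(2*G*B+4*G*W-9*W*B)) := by
              apply mul_nonneg hq
              rcases le_or_gt (2*G*B+4*G*W-9*W*B) 0 with hc | hc
              · have h2' : 0 ≤ (1/2+u)*(-(2*G*B+4*G*W-9*W*B)) :=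
                  mul_nonneg hu2.le (by linarith)
                have h3' : 0 ≤ G*(W-B) := mul_nonneg hGpos.le (by linarith)
                nlinarith [h2', mul_pos hGpos (show (0:ℝ) < W - B by linarith)]
              · have h2' : (1/2+u)*(2*G*B+4*G*W-9*W*B) ≤ 2*G*B+4*G*W-9*W*B := by
                  nlinarith [mul_nonneg hq hc.le]
                have h3' : 0 ≤ B*(3*W-2*G) := mul_nonneg hB.le (by linarith)
                linarith
            have h4 : 0 ≤ B*(2*G-W) := mul_nonneg hB.le (by linarith)
            nlinarith [h9, h1, h4]
          by_contra hcon
          push_neg at hcon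
          nlinarith [mul_nonneg hGpos.le (neg_nonneg.mpr hcon)]
        · have hE' : (2*W*G+G*B-3*W*B)/4 - G*(3*G-2*B-W)
              < (2*W*G+G*B-3*W*B)*((1/2-u)*(1/2+u)) := by nlinarith [h9]
          have hqD : (2*W*G+G*B-3*W*B)/4 - G*(3*G-2*B-W) < (1/2-u)*(2*W*G+G*B-3*W*B) := by
            nlinarith [h9, mul_nonneg hD.le (sq_nonneg (1/2-u))]
          have hstep1 : ((2*W*G+G*B-3*W*B)/4 - G*(3*G-2*B-W))*(4*(W-B))
              < ((1/2-u)*(2*W*G+G*B-3*W*B))*(4*(W-B)) :=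
            mul_lt_mul_of_pos_right hqD (by linarith)
          have hstep2 : ((2*W*G+G*B-3*W*B)/4 - G*(3*G-2*B-W))*(B+2*W)
              < ((2*W*G+G*B-3*W*B)*((1/2-u)*(1/2+u)))*(B+2*W) :=
            mul_lt_mul_of_pos_right hE' (by linarith)
          have hKEY2 : 0 ≤ 9*B*((W-G)*(W-2*G+B)) :=
            mul_nonneg (by linarith) (mul_nonneg (by linarith) (by linarith))
          have hDT : 0 < (2*W*G+G*B-3*W*B) *
              ((9/4)*(4*G-2*W-B) + (1/2-u)*(4*(W-B)+(B+2*W)*(1/2+u))) := by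
            nlinarith [hstep1, hstep2, hKEY2]
          by_contra hcon
          push_neg at hcon
          nlinarith [mul_nonneg hD.le (neg_nonneg.mpr hcon)]
      linarith


theorem aux_quad (aq L cq Jq μ x y w : ℝ) (haq : aq < 0) (hL : L < 0)
    (hcoef : 0 < 2*aq*cq - 4*Jq^2) (hne : x ≠ 0 ∨ y ≠ 0 ∨ w ≠ 0) (hμ : 0 ≤ μ)
    (hkey : 2*aq*(μ*(x^2+y^2+w^2))
      = (aq*L)*(x-y)^2 + (aq*(x+y)+2*Jq*w)^2 + (2*aq*cq-4*Jq^2)*w^2) : False := by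
  have hvx : 0 < x^2 + y^2 + w^2 := by
    rcases hne with h | h | h
    · have := lt_of_le_of_ne (sq_nonneg x) (Ne.symm (pow_ne_zero 2 h))
      nlinarith [sq_nonneg y, sq_nonneg w]
    · have := lt_of_le_of_ne (sq_nonneg y) (Ne.symm (pow_ne_zero 2 h))
      nlinarith [sq_nonneg x, sq_nonneg w]
    · have := lt_of_le_of_ne (sq_nonneg w) (Ne.symm (pow_ne_zero 2 h))
      nlinarith [sq_nonneg x, sq_nonneg y]
  have hQ0 : 0 ≤ μ * (x^2+y^2+w^2) := mul_nonneg hμ hvx.le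
  have hle : (aq*L)*(x-y)^2 + (aq*(x+y)+2*Jq*w)^2 + (2*aq*cq-4*Jq^2)*w^2 ≤ 0 := by
    rw [← hkey]
    nlinarith [mul_nonneg hQ0 (by linarith : (0:ℝ) ≤ -(2*aq))]
  have haL : 0 < aq*L := mul_pos_of_neg_of_neg haq hL
  have hd2 : (x-y)^2 ≤ 0 := by
    nlinarith [hle, sq_nonneg (aq*(x+y)+2*Jq*w), mul_nonneg hcoef.le (sq_nonneg w), haL]
  have hw2 : w^2 ≤ 0 := by
    nlinarith [hle, sq_nonneg (aq*(x+y)+2*Jq*w), mul_nonneg haL.le (sq_nonneg (x-y)), hcoef]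
  have hs2 : (aq*(x+y)+2*Jq*w)^2 ≤ 0 := by
    nlinarith [hle, mul_nonneg haL.le (sq_nonneg (x-y)), mul_nonneg hcoef.le (sq_nonneg w)]
  have hd : x - y = 0 := sq_eq_zero_iff.mp (le_antisymm hd2 (sq_nonneg _))
  have hw : w = 0 := sq_eq_zero_iff.mp (le_antisymm hw2 (sq_nonneg _))
  have hsz : aq*(x+y) + 2*Jq*w = 0 := sq_eq_zero_iff.mp (le_antisymm hs2 (sq_nonneg _))
  have hxy : x + y = 0 := by
    rw [hw] at hsz
    have h' : aq * (x+y) = 0 := by linarith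
    rcases mul_eq_zero.mp h' with h | h
    · exact absurd h (ne_of_lt haq)
    · exact h
  have hx : x = 0 := by linarith
  have hy : y = 0 := by linarith
  rw [hx, hy, hw] at hvx
  norm_num at hvx

/-- Flux matrix of the star-shaped network with `M = 3`. -/
noncomputable def starFlux3 (φ0 : ℝ) : Matrix (Fin 3) (Fin 3) ℝ :=
  !![1 - φ0, 0, φ0; 0, 1 - φ0, φ0; φ0, φ0, 1 - 2 * φ0]

/-- Infection rates: `β₁ = β₂ = β0`, `β₃ = ζ·β0`. -/
noncomputable def starBeta3 (β0 ζ : ℝ) : Fin 3 → ℝ := ![β0, β0, ζ * β0]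

/-- Jacobian of the infected subsystem at the disease-free equilibrium:
`J_{ik} = Σ_j β_j φ_{ij} φ_{kj} − γ·δ_{ik}`. -/
noncomputable def starJac3 (β0 ζ γ φ0 : ℝ) : Matrix (Fin 3) (Fin 3) ℝ :=
  Matrix.of fun i k =>
    (∑ j, starBeta3 β0 ζ j * starFlux3 φ0 i j * starFlux3 φ0 k j)
      - γ * (if i = k then 1 else 0)

set_option maxHeartbeats 2000000 in
theorem star3_DFE_stable (β0 γ ζ φ0 : ℝ)
    (hβ0 : 0 < β0) (hβγ : β0 < γ) (hζβ : γ < ζ * β0)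
    (hζcrit : ζ < 1 + 3 * (1 - β0 / γ) / (β0 / γ))
    (hφ0 : 0 < φ0) (hφ1 : φ0 ≤ 1 / 2)
    (hnear : |φ0 - 1 / 3| <
      (1 / 3) * Real.sqrt ((3 * (1 - β0 / γ) - (β0 / γ) * (ζ - 1)) /
        ((β0 / γ) * (3 * ζ * (1 - β0 / γ) - (ζ - 1))))) :
    ∀ μ ∈ spectrum ℝ (starJac3 β0 ζ γ φ0), μ < 0 := by
  have hγ : 0 < γ := hβ0.trans hβγ
  have hγ' : γ ≠ 0 := ne_of_gt hγ
  have hβ0' : β0 ≠ 0 := ne_of_gt hβ0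
  have hR : 0 < β0 / γ := div_pos hβ0 hγ
  -- ζβ0 < 3γ - 2β0
  have hZc : ζ * β0 < 3 * γ - 2 * β0 := by
    have h1 : ζ - 1 < 3 * (1 - β0 / γ) / (β0 / γ) := by linarith
    have h2 : (ζ - 1) * (β0 / γ) < 3 * (1 - β0 / γ) := (lt_div_iff₀ hR).mp h1
    have h3 : (ζ - 1) * (β0 / γ) * γ < 3 * (1 - β0 / γ) * γ :=
      mul_lt_mul_of_pos_right h2 hγ
    have e1 : (ζ - 1) * (β0 / γ) * γ = (ζ - 1) * β0 := by field_simp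
    have e2 : 3 * (1 - β0 / γ) * γ = 3 * (γ - β0) := by field_simp; try ring
    rw [e1, e2] at h3
    nlinarith [h3]
  have hNg : 0 < 3 * γ - 2 * β0 - ζ * β0 := by linarith
  -- denominator positivity
  have hβD : 0 < β0 * (2 * ζ * γ + γ - 3 * ζ * β0) := by
    nlinarith [mul_pos (sub_pos.mpr hζβ) (sub_pos.mpr hβγ), mul_pos hγ hNg]
  have hβD' : β0 * (2 * ζ * γ + γ - 3 * ζ * β0) ≠ 0 := ne_of_gt hβD
  have hDpos : 0 < 2 * (ζ*β0) * γ + γ * β0 - 3 * (ζ*β0) * β0 := by nlinarith [hβD]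
  -- rewrite the sqrt argument
  have hDq : 0 < (β0 / γ) * (3 * ζ * (1 - β0 / γ) - (ζ - 1)) := by
    have e : (β0 / γ) * (3 * ζ * (1 - β0 / γ) - (ζ - 1))
        = (β0 * (2 * ζ * γ + γ - 3 * ζ * β0)) / γ^2 := by field_simp; ring
    rw [e]; positivity
  have hArg : (3 * (1 - β0 / γ) - (β0 / γ) * (ζ - 1)) /
        ((β0 / γ) * (3 * ζ * (1 - β0 / γ) - (ζ - 1)))
      = (γ * (3 * γ - 2 * β0 - ζ * β0)) / (β0 * (2 * ζ * γ + γ - 3 * ζ * β0)) := by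
    rw [div_eq_div_iff (ne_of_gt hDq) hβD']
    field_simp
    ring
  have hArgpos : 0 ≤ (γ * (3 * γ - 2 * β0 - ζ * β0)) / (β0 * (2 * ζ * γ + γ - 3 * ζ * β0)) :=
    le_of_lt (div_pos (mul_pos hγ hNg) hβD)
  rw [hArg] at hnear
  -- square the near condition
  have hsq : (φ0 - 1/3) * (φ0 - 1/3) <
      ((1/3) * Real.sqrt ((γ * (3 * γ - 2 * β0 - ζ * β0)) / (β0 * (2 * ζ * γ + γ - 3 * ζ * β0)))) *
      ((1/3) * Real.sqrt ((γ * (3 * γ - 2 * β0 - ζ * β0)) / (β0 * (2 * ζ * γ + γ - 3 * ζ * β0)))) := by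
    have := mul_self_lt_mul_self (abs_nonneg (φ0 - 1/3)) hnear
    calc (φ0 - 1/3) * (φ0 - 1/3) = |φ0 - 1/3| * |φ0 - 1/3| := (abs_mul_abs_self _).symm
      _ < _ := this
  have hss : Real.sqrt ((γ * (3 * γ - 2 * β0 - ζ * β0)) / (β0 * (2 * ζ * γ + γ - 3 * ζ * β0))) *
      Real.sqrt ((γ * (3 * γ - 2 * β0 - ζ * β0)) / (β0 * (2 * ζ * γ + γ - 3 * ζ * β0)))
      = (γ * (3 * γ - 2 * β0 - ζ * β0)) / (β0 * (2 * ζ * γ + γ - 3 * ζ * β0)) :=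
    Real.mul_self_sqrt hArgpos
  have ht2 : (φ0 - 1/3) * (φ0 - 1/3) <
      (1/9) * ((γ * (3 * γ - 2 * β0 - ζ * β0)) / (β0 * (2 * ζ * γ + γ - 3 * ζ * β0))) := by
    calc (φ0 - 1/3) * (φ0 - 1/3) < _ := hsq
      _ = (1/9) * ((γ * (3 * γ - 2 * β0 - ζ * β0)) / (β0 * (2 * ζ * γ + γ - 3 * ζ * β0))) := by
        rw [show ∀ s : ℝ, (1/3)*s*((1/3)*s) = (1/9)*(s*s) from fun s => by ring, hss]
  have ht9 : (φ0 - 1/3) * (φ0 - 1/3) * (9 * (β0 * (2 * ζ * γ + γ - 3 * ζ * β0)))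
      < γ * (3 * γ - 2 * β0 - ζ * β0) := by
    have h := mul_lt_mul_of_pos_right ht2 (by positivity :
      (0:ℝ) < 9 * (β0 * (2 * ζ * γ + γ - 3 * ζ * β0)))
    have e : (1/9) * ((γ * (3 * γ - 2 * β0 - ζ * β0)) / (β0 * (2 * ζ * γ + γ - 3 * ζ * β0)))
        * (9 * (β0 * (2 * ζ * γ + γ - 3 * ζ * β0))) = γ * (3 * γ - 2 * β0 - ζ * β0) := by
      field_simp
      exact mul_div_cancel_right₀ _ (ne_of_gt (by nlinarith [hβD, hβ0]))
    linarith [e ▸ h]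
  -- instantiate the key lemma with W = ζβ0, u = 3φ0 - 1
  have h9aux : (2*(ζ*β0)*γ + γ*β0 - 3*(ζ*β0)*β0) * (3*φ0 - 1)^2
      < γ * (3*γ - 2*β0 - (ζ*β0)) := by linarith [ht9]
  have ha9 := aux_aNeg β0 γ (ζ*β0) (3*φ0 - 1) hβ0 hβγ hζβ
    (by linarith) (by linarith) (by linarith) hDpos h9aux
  -- derived negativity facts
  have haq : β0*(1-φ0)^2 + 2*(ζ*β0)*φ0^2 - γ < 0 := by nlinarith [ha9]
  have hL : β0*(1-φ0)^2 - γ < 0 := by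
    nlinarith [mul_pos hβ0 (mul_pos hφ0 (show (0:ℝ) < 2 - φ0 by linarith))]
  have hdet : 0 < (β0*(1-φ0)^2 + 2*(ζ*β0)*φ0^2 - γ) * (2*β0*φ0^2 + ζ*β0*(1-2*φ0)^2 - γ)
      - 2*(β0*φ0*(1-φ0) + ζ*β0*φ0*(1-2*φ0))^2 := by nlinarith [ht9]
  -- spectrum → eigenvector
  intro μ hμ
  rw [← AlgEquiv.spectrum_eq (Matrix.toLinAlgEquiv (Pi.basisFun ℝ (Fin 3))),
    ← Module.End.hasEigenvalue_iff_mem_spectrum] at hμ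
  obtain ⟨v, hv⟩ := hμ.exists_hasEigenvector
  have heq := hv.apply_eq_smul
  have h0 := congr_fun heq 0
  have h1 := congr_fun heq 1
  have h2 := congr_fun heq 2
  simp only [Matrix.toLinAlgEquiv_apply, Pi.basisFun_repr, Pi.basisFun_apply,
    Finset.univ_sum_single, Matrix.mulVec, dotProduct, Fin.sum_univ_three,
    starJac3, starFlux3, starBeta3, Matrix.of_apply, Matrix.cons_val', Matrix.cons_val_zero,
    Matrix.cons_val_one, Matrix.head_cons, Matrix.empty_val', Matrix.cons_val_fin_one,
    Matrix.head_fin_const, Pi.smul_apply, smul_eq_mul, Matrix.cons_val_two,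
    Matrix.tail_cons] at h0 h1 h2
  norm_num [Pi.single_apply, Fin.ext_iff] at h0 h1 h2
  have hne : v 0 ≠ 0 ∨ v 1 ≠ 0 ∨ v 2 ≠ 0 := by
    by_contra hc
    push_neg at hc
    exact hv.right (funext fun i => by fin_cases i <;> simp [hc.1, hc.2.1, hc.2.2])
  by_contra hcon
  push_neg at hcon
  refine aux_quad (β0*(1-φ0)^2 + 2*(ζ*β0)*φ0^2 - γ) (β0*(1-φ0)^2 - γ)
    (2*β0*φ0^2 + ζ*β0*(1-2*φ0)^2 - γ) (β0*φ0*(1-φ0) + ζ*β0*φ0*(1-2*φ0))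
    μ (v 0) (v 1) (v 2) haq hL (by nlinarith [hdet]) hne hcon ?_
  linear_combination (-2*(β0*(1-φ0)^2 + 2*(ζ*β0)*φ0^2 - γ)*(v 0)) * h0
    + (-2*(β0*(1-φ0)^2 + 2*(ζ*β0)*φ0^2 - γ)*(v 1)) * h1
    + (-2*(β0*(1-φ0)^2 + 2*(ζ*β0)*φ0^2 - γ)*(v 2)) * h2
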